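/- Spanning-tree formula for the direction of current (unweighted Kirchhoff / Shapiro lemma, unit conductances). Let G be a connected simple graph on a finite vertex set V, let L be its (unweighted) Laplacian matrix, and let s ≠ t be vertices. Suppose x : V → ℝ satisfies L *ᵥ x = e_s − e_t (unit current injected at s and extracted at t). Then for every pair of adjacent vertices a, b of G: (x a − x b) · τ(G) = N(s, a→b, t) − N(s, b→a, t), where τ(G) is the number of spanning trees of G, N(s, a→b, t) is the number of spanning trees T of G such that the unique path in T from s to t uses the edge {a,b} and visits a before b, and N(s, b→a, t) is defined analogously with b before a. In particular, the current through edge {a,b} is directed from a to b exactly when N(s, a→b, t) > N(s, b→a, t). -/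

import Mathlib

open Matrix

/-- `T` is a spanning tree of `G`: a subgraph (on the same vertex set) that is a tree. -/
def IsSpanningTree {V : Type*} (G T : SimpleGraph V) : Prop :=
  T ≤ G ∧ T.IsTree

/-- The unique path in the tree `T` from `s` to `t` uses the edge `{a,b}` and visits
`a` before `b` (i.e. it traverses the dart `(a,b)`). -/
def PathUsesDart {V : Type*} (T : SimpleGraph V) (s t a b : V) : Prop :=
  ∃ p : T.Walk s t, p.IsPath ∧ ∃ d ∈ p.darts, d.toProd = (a, b)

namespace ShapiroAux
open SimpleGraph Finset

variable {V : Type*}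

/-- A spanning two-component forest of `G` separating `s` from `t`. -/
def TwoForest (G : SimpleGraph V) (s t : V) (F : SimpleGraph V) : Prop :=
  F ≤ G ∧ F.IsAcyclic ∧ ¬F.Reachable s t ∧ ∀ v, F.Reachable s v ∨ F.Reachable t v

lemma acyclic_anti {F T : SimpleGraph V} (h : F ≤ T) (hT : T.IsAcyclic) : F.IsAcyclic :=
  fun _v c hc => hT (c.mapLe h) (hc.mapLe h)

open SimpleGraph Finset
variable {V : Type*}

lemma exists_prefix_of_mem_darts {G : SimpleGraph V} {u v : V} {p : G.Walk u v}
    (hp : p.IsTrail) {d : G.Dart} (hd : d ∈ p.darts) :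
    ∃ q : G.Walk u d.fst, (∀ e ∈ q.edges, e ∈ p.edges) ∧ d.edge ∉ q.edges := by
  induction p with
  | nil => simp at hd
  | @cons u c w h rest ih =>
    rw [SimpleGraph.Walk.darts_cons, List.mem_cons] at hd
    rcases hd with rfl | hd'
    · exact ⟨SimpleGraph.Walk.nil, by simp, by simp⟩
    · rw [SimpleGraph.Walk.isTrail_cons] at hp
      obtain ⟨q, hsub, hne⟩ := ih hp.1 hd'
      refine ⟨SimpleGraph.Walk.cons h q, ?_, ?_⟩
      · intro e he
        rw [SimpleGraph.Walk.edges_cons, List.mem_cons] at he ⊢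
        rcases he with rfl | he
        · exact Or.inl rfl
        · exact Or.inr (hsub e he)
      · rw [SimpleGraph.Walk.edges_cons, List.mem_cons]
        rintro (hfst | hmem)
        · have : d.edge ∈ rest.edges := List.mem_map_of_mem hd'
          rw [hfst] at this
          exact hp.2 this
        · exact hne hmem

lemma reachable_delete_start {G : SimpleGraph V} {u v : V} {p : G.Walk u v}
    (hp : p.IsTrail) {d : G.Dart} (hd : d ∈ p.darts) :
    (G.deleteEdges {d.edge}).Reachable u d.fst := by
  obtain ⟨q, _hsub, hne⟩ := exists_prefix_of_mem_darts hp hd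
  exact ⟨q.toDeleteEdges {d.edge} (fun e he h' => hne (by simpa using h' ▸ he))⟩

lemma reachable_delete_end {G : SimpleGraph V} {u v : V} {p : G.Walk u v}
    (hp : p.IsTrail) {d : G.Dart} (hd : d ∈ p.darts) :
    (G.deleteEdges {d.edge}).Reachable v d.snd := by
  have hd' : d.symm ∈ p.reverse.darts := by
    rw [SimpleGraph.Walk.darts_reverse, List.mem_reverse, List.mem_map]
    exact ⟨d, hd, rfl⟩
  have := reachable_delete_start hp.reverse hd'
  simpa using this

lemma key_path {G : SimpleGraph V} [Fintype V] [DecidableEq V] {s t : V}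
    (p : G.Walk s t) (hp : p.IsPath) (v : V) :
    ∑ u : V, ((if ∃ d ∈ p.darts, d.toProd = (v, u) then (1 : ℝ) else 0)
        - (if ∃ d ∈ p.darts, d.toProd = (u, v) then (1 : ℝ) else 0))
      = (if v = s then 1 else 0) - (if v = t then 1 else 0) := by
  classical
  revert hp
  induction p with
  | nil => intro _; simp
  | @cons s c t h q ih =>
    intro hp
    rw [SimpleGraph.Walk.cons_isPath_iff] at hp
    have hsc : ¬∃ d ∈ q.darts, d.toProd = (s, c) := by
      rintro ⟨d, hd, hde⟩
      apply hp.2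
      have := SimpleGraph.Walk.dart_fst_mem_support_of_mem_darts q hd
      rwa [show d.fst = s from congrArg Prod.fst hde] at this
    have h1 : ∀ u : V, (∃ d ∈ (SimpleGraph.Walk.cons h q).darts, d.toProd = (v, u)) ↔
        ((v, u) = (s, c) ∨ ∃ d ∈ q.darts, d.toProd = (v, u)) := by
      intro u
      rw [SimpleGraph.Walk.darts_cons]
      constructor
      · rintro ⟨d, hd, hde⟩
        rcases List.mem_cons.mp hd with rfl | hd'
        · exact Or.inl hde.symm
        · exact Or.inr ⟨d, hd', hde⟩
      · rintro (heq | ⟨d, hd, hde⟩)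
        · exact ⟨_, List.mem_cons_self, heq.symm⟩
        · exact ⟨d, List.mem_cons_of_mem _ hd, hde⟩
    have h2 : ∀ u : V, (∃ d ∈ (SimpleGraph.Walk.cons h q).darts, d.toProd = (u, v)) ↔
        ((u, v) = (s, c) ∨ ∃ d ∈ q.darts, d.toProd = (u, v)) := by
      intro u
      rw [SimpleGraph.Walk.darts_cons]
      constructor
      · rintro ⟨d, hd, hde⟩
        rcases List.mem_cons.mp hd with rfl | hd'
        · exact Or.inl hde.symm
        · exact Or.inr ⟨d, hd', hde⟩
      · rintro (heq | ⟨d, hd, hde⟩)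
        · exact ⟨_, List.mem_cons_self, heq.symm⟩
        · exact ⟨d, List.mem_cons_of_mem _ hd, hde⟩
    have split1 : ∀ u : V, (if ∃ d ∈ (SimpleGraph.Walk.cons h q).darts, d.toProd = (v, u)
          then (1 : ℝ) else 0)
        = (if (v, u) = (s, c) then (1 : ℝ) else 0)
          + (if ∃ d ∈ q.darts, d.toProd = (v, u) then (1 : ℝ) else 0) := by
      intro u
      rw [if_congr (h1 u) rfl rfl]
      by_cases hA : (v, u) = (s, c)
      · have hB : ¬∃ d ∈ q.darts, d.toProd = (v, u) := fun ⟨x, hx, hxe⟩ => hsc ⟨x, hx, by rw [hxe, hA]⟩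
        rw [if_pos (Or.inl hA), if_pos hA, if_neg hB]; norm_num
      · by_cases hB : ∃ d ∈ q.darts, d.toProd = (v, u)
        · rw [if_pos (Or.inr hB), if_pos hB, if_neg hA]; norm_num
        · rw [if_neg (not_or.mpr ⟨hA, hB⟩), if_neg hA, if_neg hB]; norm_num
    have split2 : ∀ u : V, (if ∃ d ∈ (SimpleGraph.Walk.cons h q).darts, d.toProd = (u, v)
          then (1 : ℝ) else 0)
        = (if (u, v) = (s, c) then (1 : ℝ) else 0)
          + (if ∃ d ∈ q.darts, d.toProd = (u, v) then (1 : ℝ) else 0) := by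
      intro u
      rw [if_congr (h2 u) rfl rfl]
      by_cases hA : (u, v) = (s, c)
      · have hB : ¬∃ d ∈ q.darts, d.toProd = (u, v) := fun ⟨x, hx, hxe⟩ => hsc ⟨x, hx, by rw [hxe, hA]⟩
        rw [if_pos (Or.inl hA), if_pos hA, if_neg hB]; norm_num
      · by_cases hB : ∃ d ∈ q.darts, d.toProd = (u, v)
        · rw [if_pos (Or.inr hB), if_pos hB, if_neg hA]; norm_num
        · rw [if_neg (not_or.mpr ⟨hA, hB⟩), if_neg hA, if_neg hB]; norm_num
    have hsum : ∑ u : V, ((if ∃ d ∈ (SimpleGraph.Walk.cons h q).darts, d.toProd = (v, u)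
            then (1 : ℝ) else 0)
          - (if ∃ d ∈ (SimpleGraph.Walk.cons h q).darts, d.toProd = (u, v) then (1 : ℝ) else 0))
        = ∑ u : V, (((if (v, u) = (s, c) then (1 : ℝ) else 0)
              - (if (u, v) = (s, c) then (1 : ℝ) else 0))
            + ((if ∃ d ∈ q.darts, d.toProd = (v, u) then (1 : ℝ) else 0)
              - (if ∃ d ∈ q.darts, d.toProd = (u, v) then (1 : ℝ) else 0))) := by
      refine Finset.sum_congr rfl fun u _ => ?_
      rw [split1 u, split2 u]; ring
    rw [hsum, Finset.sum_add_distrib, ih hp.1, Finset.sum_sub_distrib]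
    have e1 : ∑ u : V, (if (v, u) = (s, c) then (1 : ℝ) else 0) = if v = s then 1 else 0 := by
      simp only [Prod.mk.injEq]
      by_cases hv : v = s
      · simp [hv]
      · simp [hv]
    have e2 : ∑ u : V, (if (u, v) = (s, c) then (1 : ℝ) else 0) = if v = c then 1 else 0 := by
      simp only [Prod.mk.injEq]
      by_cases hv : v = c
      · simp [hv]
      · simp [hv]
    rw [e1, e2]
    ring

open SimpleGraph Finset
variable {V : Type*}

lemma connected_deleteEdges {T : SimpleGraph V} (hc : T.Connected) {v w : V}
    (h : (T.deleteEdges {s(v, w)}).Reachable v w) : (T.deleteEdges {s(v, w)}).Connected := by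
  rw [connected_iff]
  refine ⟨?_, hc.nonempty⟩
  intro x y
  obtain ⟨p⟩ := hc.preconnected x y
  induction p with
  | nil => exact Reachable.refl _
  | @cons a b c hadj q ih =>
    refine Reachable.trans ?_ ih
    by_cases he : s(a, b) = s(v, w)
    · rcases Sym2.eq_iff.mp he with ⟨rfl, rfl⟩ | ⟨rfl, rfl⟩
      · exact h
      · exact h.symm
    · exact SimpleGraph.Adj.reachable (by simp [hadj, he])

lemma exists_spanning_tree {G : SimpleGraph V} [Finite V] (hG : G.Connected) :
    ∃ T : SimpleGraph V, T ≤ G ∧ T.IsTree := by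
  classical
  have hwf : WellFounded ((· < ·) : SimpleGraph V → SimpleGraph V → Prop) :=
    Finite.to_wellFoundedLT.wf
  obtain ⟨T, ⟨hTG, hTc⟩, hmin⟩ := hwf.has_min {H : SimpleGraph V | H ≤ G ∧ H.Connected}
    ⟨G, le_refl G, hG⟩
  refine ⟨T, hTG, hTc, ?_⟩
  rw [isAcyclic_iff_forall_adj_isBridge]
  intro v w hvw
  by_contra hbr
  rw [isBridge_iff] at hbr
  push_neg at hbr
  have hreach : (T.deleteEdges {s(v, w)}).Reachable v w := hbr
  have hconn := connected_deleteEdges hTc hreach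
  have hlt : T.deleteEdges {s(v, w)} < T := by
    refine lt_of_le_of_ne (deleteEdges_le _) ?_
    intro heq
    have h2 := hvw
    rw [← heq] at h2
    simp at h2
  exact hmin _ ⟨le_trans (deleteEdges_le _) hTG, hconn⟩ hlt

lemma edge_le_of_adj {G : SimpleGraph V} {a b : V} (hab : G.Adj a b) : edge a b ≤ G := by
  intro u v huv
  rw [edge_adj] at huv
  rcases huv.1 with ⟨rfl, rfl⟩ | ⟨rfl, rfl⟩
  · exact hab
  · exact hab.symm

lemma roundtrip1 {F : SimpleGraph V} {a b : V} (hnab : ¬F.Adj a b) :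
    (F ⊔ edge a b).deleteEdges {s(a, b)} = F := by
  ext u v
  simp only [deleteEdges_adj, sup_adj, edge_adj, Set.mem_singleton_iff, Sym2.eq_iff]
  constructor
  · rintro ⟨hor, hne⟩
    rcases hor with hF | ⟨⟨rfl, rfl⟩ | ⟨rfl, rfl⟩, _⟩
    · exact hF
    · exact absurd (Or.inl ⟨rfl, rfl⟩) hne
    · exact absurd (Or.inr ⟨rfl, rfl⟩) hne
  · intro hF
    refine ⟨Or.inl hF, ?_⟩
    rintro (⟨rfl, rfl⟩ | ⟨rfl, rfl⟩)
    · exact hnab hF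
    · exact hnab hF.symm

lemma roundtrip2 {T : SimpleGraph V} {a b : V} (hab : T.Adj a b) :
    T.deleteEdges {s(a, b)} ⊔ edge a b = T := by
  ext u v
  simp only [sup_adj, deleteEdges_adj, edge_adj, Set.mem_singleton_iff, Sym2.eq_iff]
  constructor
  · rintro (⟨hT, _⟩ | ⟨⟨rfl, rfl⟩ | ⟨rfl, rfl⟩, _⟩)
    · exact hT
    · exact hab
    · exact hab.symm
  · intro hT
    by_cases he : (u = a ∧ v = b) ∨ (u = b ∧ v = a)
    · exact Or.inr ⟨he, hT.ne⟩
    · exact Or.inl ⟨hT, he⟩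

open SimpleGraph Finset
variable {V : Type*}









lemma pud_adj {T : SimpleGraph V} {s t a b : V} (h : PathUsesDart T s t a b) : T.Adj a b := by
  obtain ⟨p, _hp, d, _hd, hde⟩ := h
  have := d.adj
  rw [show d.toProd.1 = a from congrArg Prod.fst hde,
    show d.toProd.2 = b from congrArg Prod.snd hde] at this
  exact this

lemma tree_of_forest {G F : SimpleGraph V} {s t a b : V} (hab : G.Adj a b)
    (hF : TwoForest G s t F) (hsa : F.Reachable s a) (htb : F.Reachable t b) :
    IsSpanningTree G (F ⊔ edge a b) ∧ PathUsesDart (F ⊔ edge a b) s t a b := by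
  obtain ⟨hFG, hFac, hFst, hFtot⟩ := hF
  have hnab : ¬F.Reachable a b := fun h => hFst (hsa.trans (h.trans htb.symm))
  have hne : a ≠ b := by rintro rfl; exact hnab (Reachable.refl a)
  have hFadj : ¬F.Adj a b := fun h => hnab h.reachable
  set T := F ⊔ edge a b with hTdef
  have hTG : T ≤ G := sup_le hFG (edge_le_of_adj hab)
  have hdel : T.deleteEdges {s(a, b)} = F := roundtrip1 hFadj
  have hTadj : T.Adj a b := by
    rw [hTdef, sup_adj, edge_adj]
    exact Or.inr ⟨Or.inl ⟨rfl, rfl⟩, hne⟩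
  have hreachs : ∀ v, T.Reachable s v := by
    intro v
    have hsT : T.Reachable s t :=
      ((hsa.mono le_sup_left).trans hTadj.reachable).trans (htb.mono le_sup_left).symm
    rcases hFtot v with h | h
    · exact h.mono le_sup_left
    · exact hsT.trans (h.mono le_sup_left)
  have hTconn : T.Connected := by
    rw [connected_iff]
    exact ⟨fun x y => (hreachs x).symm.trans (hreachs y), ⟨s⟩⟩
  have hsubF : ∀ {x y : V} (q : T.Walk x y), s(a, b) ∉ q.edges →
      ∀ e ∈ q.edges, e ∈ F.edgeSet := by
    intro x y q hq e he
    have heT : e ∈ T.edgeSet := q.edges_subset_edgeSet he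
    have h4 : e ∈ (T.deleteEdges {s(a, b)}).edgeSet := by
      rw [edgeSet_deleteEdges]
      exact ⟨heT, by simp only [Set.mem_singleton_iff]; rintro rfl; exact hq he⟩
    rwa [hdel] at h4
  have hTac : T.IsAcyclic := by
    intro u c hc
    by_cases hce : s(a, b) ∈ c.edges
    · have h2 : T.Adj a b ∧ (T \ fromEdgeSet {s(a, b)}).Reachable a b :=
        adj_and_reachable_delete_edges_iff_exists_cycle.mpr ⟨u, c, hc, hce⟩
      have h3 : (T.deleteEdges {s(a, b)}).Reachable a b := h2.2
      rw [hdel] at h3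
      exact hnab h3
    · exact hFac (c.transfer F (hsubF c hce)) (hc.transfer (hsubF c hce))
  have hTree : T.IsTree := ⟨hTconn, hTac⟩
  refine ⟨⟨hTG, hTree⟩, ?_⟩
  obtain ⟨p, hp, -⟩ := hTree.existsUnique_path s t
  refine ⟨p, hp, ?_⟩
  have hedge : s(a, b) ∈ p.edges := by
    by_contra hne'
    exact hFst ⟨p.transfer F (hsubF p hne')⟩
  rw [SimpleGraph.Walk.edges, List.mem_map] at hedge
  obtain ⟨d, hd, hde⟩ := hedge
  rcases dart_edge_eq_mk'_iff'.mp hde with ⟨h1, h2⟩ | ⟨h1, h2⟩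
  · exact ⟨d, hd, Prod.ext h1 h2⟩
  · exfalso
    have hreach := reachable_delete_start hp.isTrail hd
    rw [hde, h1, hdel] at hreach
    exact hFst (hreach.trans htb.symm)

lemma forest_of_tree [DecidableEq V] {G T : SimpleGraph V} {s t a b : V}
    (hT : IsSpanningTree G T) (hpud : PathUsesDart T s t a b) :
    TwoForest G s t (T.deleteEdges {s(a, b)}) ∧
      ((T.deleteEdges {s(a, b)}).Reachable s a ∧ (T.deleteEdges {s(a, b)}).Reachable t b) := by
  obtain ⟨p, hp, d, hd, hde⟩ := hpud
  have hdfst : d.fst = a := congrArg Prod.fst hde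
  have hdsnd : d.snd = b := congrArg Prod.snd hde
  have hdedge : d.edge = s(a, b) := by rw [SimpleGraph.Dart.edge, hde]
  have hTab : T.Adj a b := pud_adj ⟨p, hp, d, hd, hde⟩
  set F := T.deleteEdges {s(a, b)} with hFdef
  have hFle : F ≤ T := deleteEdges_le _
  have hFsa : F.Reachable s a := by
    have h := reachable_delete_start hp.isTrail hd
    rwa [hdedge, hdfst] at h
  have hFtb : F.Reachable t b := by
    have h := reachable_delete_end hp.isTrail hd
    rwa [hdedge, hdsnd] at h
  have hnFab : ¬F.Reachable a b := by
    have hbridge := (isAcyclic_iff_forall_adj_isBridge.mp hT.2.IsAcyclic) hTab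
    rw [isBridge_iff] at hbridge
    exact hbridge
  have hFst : ¬F.Reachable s t := fun h => hnFab (hFsa.symm.trans (h.trans hFtb))
  refine ⟨⟨hFle.trans hT.1, acyclic_anti hFle hT.2.IsAcyclic, hFst, ?_⟩, hFsa, hFtb⟩
  intro v
  obtain ⟨q0⟩ := hT.2.isConnected.preconnected a v
  set q := q0.toPath.val with hqdef
  have hq : q.IsPath := q0.toPath.property
  by_cases hce : s(a, b) ∈ q.edges
  · rw [SimpleGraph.Walk.edges, List.mem_map] at hce
    obtain ⟨d', hd', hde'⟩ := hce
    rcases dart_edge_eq_mk'_iff'.mp hde' with ⟨h1, h2⟩ | ⟨h1, h2⟩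
    · -- dart (a,b) in q; suffix from b reaches v
      have h := reachable_delete_end hq.isTrail hd'
      rw [hde', h2] at h
      exact Or.inr (hFtb.trans h.symm)
    · -- dart (b,a): impossible since q starts at a and is a path
      exfalso
      have hmem : d'.snd ∈ q.support.tail := by
        rw [← SimpleGraph.Walk.map_snd_darts]
        exact List.mem_map_of_mem hd'
      rw [h2] at hmem
      have hnodup : q.support.Nodup := hq.support_nodup
      rw [SimpleGraph.Walk.support_eq_cons] at hnodup
      exact (List.nodup_cons.mp hnodup).1 hmem
  · have hsub : ∀ e ∈ q.edges, e ∈ F.edgeSet := by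
      intro e he
      rw [hFdef, edgeSet_deleteEdges]
      exact ⟨q.edges_subset_edgeSet he, by
        simp only [Set.mem_singleton_iff]; rintro rfl; exact hce he⟩
    exact Or.inl (hFsa.trans ⟨q.transfer F hsub⟩)

noncomputable def forestTreeEquiv [DecidableEq V] {G : SimpleGraph V} {s t a b : V} (hab : G.Adj a b) :
    {F : SimpleGraph V // TwoForest G s t F ∧ (F.Reachable s a ∧ F.Reachable t b)} ≃
      {T : SimpleGraph V // IsSpanningTree G T ∧ PathUsesDart T s t a b} where
  toFun := fun F => ⟨F.1 ⊔ edge a b, tree_of_forest hab F.2.1 F.2.2.1 F.2.2.2⟩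
  invFun := fun T => ⟨T.1.deleteEdges {s(a, b)}, forest_of_tree T.2.1 T.2.2⟩
  left_inv := by
    rintro ⟨F, hF, hsa, htb⟩
    apply Subtype.ext
    have hnab : ¬F.Adj a b := fun h =>
      hF.2.2.1 (hsa.trans (h.reachable.trans htb.symm))
    exact roundtrip1 hnab
  right_inv := by
    rintro ⟨T, hT, hpud⟩
    apply Subtype.ext
    exact roundtrip2 (pud_adj hpud)


open SimpleGraph Finset
variable {V : Type*}





lemma ncard_split {α : Type*} [Fintype α] (p q : α → Prop) :
    Nat.card {x // p x} = Nat.card {x // p x ∧ q x} + Nat.card {x // p x ∧ ¬q x} := by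
  classical
  simp_rw [Nat.card_eq_fintype_card, Fintype.card_subtype]
  rw [show (Finset.univ.filter fun x => p x ∧ q x) = (Finset.univ.filter p).filter q from
      (Finset.filter_filter _ _ _).symm,
    show (Finset.univ.filter fun x => p x ∧ ¬q x) = (Finset.univ.filter p).filter (fun x => ¬q x)
      from (Finset.filter_filter _ _ _).symm,
    Finset.card_filter_add_card_filter_not]

section Main
variable [Fintype V] [DecidableEq V]

lemma edge_diff {G : SimpleGraph V} {s t a b : V} (hab : G.Adj a b) :
    (Nat.card {F : SimpleGraph V // TwoForest G s t F ∧ F.Reachable s a} : ℝ)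
      - (Nat.card {F : SimpleGraph V // TwoForest G s t F ∧ F.Reachable s b} : ℝ)
    = (Nat.card {T : SimpleGraph V // IsSpanningTree G T ∧ PathUsesDart T s t a b} : ℝ)
      - (Nat.card {T : SimpleGraph V // IsSpanningTree G T ∧ PathUsesDart T s t b a} : ℝ) := by
  classical
  have hnotiff : ∀ (F : SimpleGraph V) (c : V), TwoForest G s t F →
      (¬F.Reachable s c ↔ F.Reachable t c) := by
    intro F c hF
    constructor
    · intro h
      rcases hF.2.2.2 c with h' | h'
      · exact absurd h' h
      · exact h'
    · intro h h'
      exact hF.2.2.1 (h'.trans h.symm)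
  have hsplit_a := ncard_split (fun F : SimpleGraph V => TwoForest G s t F ∧ F.Reachable s a)
    (fun F => F.Reachable s b)
  have hsplit_b := ncard_split (fun F : SimpleGraph V => TwoForest G s t F ∧ F.Reachable s b)
    (fun F => F.Reachable s a)
  have e1 : Nat.card {F : SimpleGraph V //
        (TwoForest G s t F ∧ F.Reachable s a) ∧ ¬F.Reachable s b}
      = Nat.card {T : SimpleGraph V // IsSpanningTree G T ∧ PathUsesDart T s t a b} := by
    refine Nat.card_congr ((Equiv.subtypeEquivRight ?_).trans (forestTreeEquiv hab))
    intro F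
    constructor
    · rintro ⟨⟨hF, hsa⟩, hnsb⟩
      exact ⟨hF, hsa, (hnotiff F b hF).mp hnsb⟩
    · rintro ⟨hF, hsa, htb⟩
      exact ⟨⟨hF, hsa⟩, (hnotiff F b hF).mpr htb⟩
  have e2 : Nat.card {F : SimpleGraph V //
        (TwoForest G s t F ∧ F.Reachable s b) ∧ ¬F.Reachable s a}
      = Nat.card {T : SimpleGraph V // IsSpanningTree G T ∧ PathUsesDart T s t b a} := by
    refine Nat.card_congr ((Equiv.subtypeEquivRight ?_).trans (forestTreeEquiv hab.symm))
    intro F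
    constructor
    · rintro ⟨⟨hF, hsb⟩, hnsa⟩
      exact ⟨hF, hsb, (hnotiff F a hF).mp hnsa⟩
    · rintro ⟨hF, hsb, hta⟩
      exact ⟨⟨hF, hsb⟩, (hnotiff F a hF).mpr hta⟩
  have ecomm : Nat.card {F : SimpleGraph V //
        (TwoForest G s t F ∧ F.Reachable s a) ∧ F.Reachable s b}
      = Nat.card {F : SimpleGraph V //
        (TwoForest G s t F ∧ F.Reachable s b) ∧ F.Reachable s a} := by
    exact Nat.card_congr (Equiv.subtypeEquivRight (by tauto))
  rw [hsplit_a, hsplit_b, e1, e2, ecomm]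
  push_cast
  ring

lemma lap_apply {G : SimpleGraph V} [DecidableRel G.Adj] {s t : V} (v : V) :
    ((G.lapMatrix ℝ).mulVec
        (fun u => (Nat.card {F : SimpleGraph V // TwoForest G s t F ∧ F.Reachable s u} : ℝ))) v
    = (Nat.card {T : SimpleGraph V // IsSpanningTree G T} : ℝ)
        * ((if v = s then 1 else 0) - (if v = t then 1 else 0)) := by
  classical
  set y : V → ℝ :=
    fun u => (Nat.card {F : SimpleGraph V // TwoForest G s t F ∧ F.Reachable s u} : ℝ) with hy
  rw [lapMatrix_mulVec_apply]
  have hdeg : (G.degree v : ℝ) * y v = ∑ _u ∈ G.neighborFinset v, y v := by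
    rw [Finset.sum_const, nsmul_eq_mul, SimpleGraph.degree]
  rw [hdeg, ← Finset.sum_sub_distrib]
  have step1 : ∑ u ∈ G.neighborFinset v, (y v - y u)
      = ∑ u ∈ G.neighborFinset v,
          ((Nat.card {T : SimpleGraph V // IsSpanningTree G T ∧ PathUsesDart T s t v u} : ℝ)
            - (Nat.card {T : SimpleGraph V // IsSpanningTree G T ∧ PathUsesDart T s t u v} : ℝ)) :=
    Finset.sum_congr rfl fun u hu => edge_diff ((G.mem_neighborFinset v u).mp hu)
  have hzero : ∀ u, ¬G.Adj v u →
      ∀ c d : V, (c = v ∧ d = u) ∨ (c = u ∧ d = v) →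
      Nat.card {T : SimpleGraph V // IsSpanningTree G T ∧ PathUsesDart T s t c d} = 0 := by
    intro u hnadj c d hcd
    have : IsEmpty {T : SimpleGraph V // IsSpanningTree G T ∧ PathUsesDart T s t c d} := by
      constructor
      rintro ⟨T, hT, hpud⟩
      have hadj : T.Adj c d := pud_adj hpud
      rcases hcd with ⟨rfl, rfl⟩ | ⟨rfl, rfl⟩
      · exact hnadj (hT.1 hadj)
      · exact hnadj (hT.1 hadj).symm
    exact Nat.card_of_isEmpty
  have step2 : ∑ u ∈ G.neighborFinset v,
        ((Nat.card {T : SimpleGraph V // IsSpanningTree G T ∧ PathUsesDart T s t v u} : ℝ)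
          - (Nat.card {T : SimpleGraph V // IsSpanningTree G T ∧ PathUsesDart T s t u v} : ℝ))
      = ∑ u : V,
        ((Nat.card {T : SimpleGraph V // IsSpanningTree G T ∧ PathUsesDart T s t v u} : ℝ)
          - (Nat.card {T : SimpleGraph V // IsSpanningTree G T ∧ PathUsesDart T s t u v} : ℝ)) := by
    refine Finset.sum_subset (Finset.subset_univ _) ?_
    intro u _ hu
    have hnadj : ¬G.Adj v u := by rwa [G.mem_neighborFinset v u] at hu
    rw [hzero u hnadj v u (Or.inl ⟨rfl, rfl⟩), hzero u hnadj u v (Or.inr ⟨rfl, rfl⟩)]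
    simp
  have hcardsum : ∀ P : SimpleGraph V → Prop,
      (Nat.card {T : SimpleGraph V // IsSpanningTree G T ∧ P T} : ℝ)
        = ∑ T ∈ Finset.univ.filter (fun T : SimpleGraph V => IsSpanningTree G T),
            (if P T then (1 : ℝ) else 0) := by
    intro P
    rw [Nat.card_eq_fintype_card, Fintype.card_subtype,
      show (Finset.univ.filter fun T : SimpleGraph V => IsSpanningTree G T ∧ P T)
        = (Finset.univ.filter (fun T : SimpleGraph V => IsSpanningTree G T)).filter P from
        (Finset.filter_filter _ _ _).symm]
    rw [Finset.natCast_card_filter]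
  have step3 : ∑ u : V,
        ((Nat.card {T : SimpleGraph V // IsSpanningTree G T ∧ PathUsesDart T s t v u} : ℝ)
          - (Nat.card {T : SimpleGraph V // IsSpanningTree G T ∧ PathUsesDart T s t u v} : ℝ))
      = ∑ T ∈ Finset.univ.filter (fun T : SimpleGraph V => IsSpanningTree G T),
          ∑ u : V, ((if PathUsesDart T s t v u then (1 : ℝ) else 0)
            - (if PathUsesDart T s t u v then (1 : ℝ) else 0)) := by
    simp_rw [hcardsum, ← Finset.sum_sub_distrib]
    rw [Finset.sum_comm]
  have step4 : ∀ T ∈ Finset.univ.filter (fun T : SimpleGraph V => IsSpanningTree G T),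
      ∑ u : V, ((if PathUsesDart T s t v u then (1 : ℝ) else 0)
          - (if PathUsesDart T s t u v then (1 : ℝ) else 0))
        = (if v = s then 1 else 0) - (if v = t then 1 else 0) := by
    intro T hT
    have hTT : IsSpanningTree G T := (Finset.mem_filter.mp hT).2
    obtain ⟨p, hp, huniq⟩ := hTT.2.existsUnique_path s t
    have hiff : ∀ c d : V, PathUsesDart T s t c d ↔ ∃ dd ∈ p.darts, dd.toProd = (c, d) := by
      intro c d
      constructor
      · rintro ⟨p', hp', dd, hdd, hde⟩
        rw [huniq p' hp'] at hdd
        exact ⟨dd, hdd, hde⟩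
      · rintro ⟨dd, hdd, hde⟩
        exact ⟨p, hp, dd, hdd, hde⟩
    calc ∑ u : V, ((if PathUsesDart T s t v u then (1 : ℝ) else 0)
          - (if PathUsesDart T s t u v then (1 : ℝ) else 0))
        = ∑ u : V, ((if ∃ dd ∈ p.darts, dd.toProd = (v, u) then (1 : ℝ) else 0)
          - (if ∃ dd ∈ p.darts, dd.toProd = (u, v) then (1 : ℝ) else 0)) := by
          refine Finset.sum_congr rfl fun u _ => ?_
          rw [if_congr (hiff v u) rfl rfl, if_congr (hiff u v) rfl rfl]
      _ = (if v = s then 1 else 0) - (if v = t then 1 else 0) := key_path p hp v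
  rw [step1, step2, step3, Finset.sum_congr rfl step4, Finset.sum_const, nsmul_eq_mul]
  congr 1
  rw [Nat.card_eq_fintype_card, Fintype.card_subtype]

end Main

end ShapiroAux

open ShapiroAux SimpleGraph in
/-- Spanning-tree formula for the direction of current (unweighted Kirchhoff/Shapiro
lemma): if `L x = e_s - e_t` for the Laplacian of a connected graph `G`, then for every
edge `(a,b)`, `(x a - x b) · τ(G) = N(s,a→b,t) - N(s,b→a,t)`; in particular the current
flows from `a` to `b` exactly when `N(s,a→b,t) > N(s,b→a,t)`. -/
theorem spanning_tree_current_formula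
    {V : Type*} [Fintype V] [DecidableEq V] (G : SimpleGraph V) [DecidableRel G.Adj]
    (hG : G.Connected) (s t : V) (hst : s ≠ t) (x : V → ℝ)
    (hx : (G.lapMatrix ℝ).mulVec x = Pi.single s 1 - Pi.single t 1)
    (a b : V) (hab : G.Adj a b) :
    (x a - x b) * (Nat.card {T : SimpleGraph V // IsSpanningTree G T} : ℝ)
        = (Nat.card {T : SimpleGraph V //
              IsSpanningTree G T ∧ PathUsesDart T s t a b} : ℝ)
          - (Nat.card {T : SimpleGraph V //
              IsSpanningTree G T ∧ PathUsesDart T s t b a} : ℝ) ∧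
    (0 < x a - x b ↔
      Nat.card {T : SimpleGraph V // IsSpanningTree G T ∧ PathUsesDart T s t b a}
        < Nat.card {T : SimpleGraph V // IsSpanningTree G T ∧ PathUsesDart T s t a b}) := by
  classical
  set y : V → ℝ :=
    fun u => (Nat.card {F : SimpleGraph V // TwoForest G s t F ∧ F.Reachable s u} : ℝ) with hydef
  set τ : ℕ := Nat.card {T : SimpleGraph V // IsSpanningTree G T} with hτdef
  have hτpos : 0 < τ := by
    obtain ⟨T, hT⟩ := exists_spanning_tree hG
    haveI : Nonempty {T : SimpleGraph V // IsSpanningTree G T} := ⟨⟨T, hT⟩⟩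
    exact Nat.card_pos
  have hτℝ : (0 : ℝ) < (τ : ℝ) := by exact_mod_cast hτpos
  set z : V → ℝ := fun v => (τ : ℝ) * x v - y v with hzdef
  have hz : Matrix.toLin' (G.lapMatrix ℝ) z = 0 := by
    rw [Matrix.toLin'_apply]
    funext v
    have hzsmul : z = (τ : ℝ) • x - y := by
      funext u; simp [hzdef, smul_eq_mul]
    rw [hzsmul, Matrix.mulVec_sub, Matrix.mulVec_smul, hx]
    have hyv := lap_apply (G := G) (s := s) (t := t) v
    simp only [Pi.sub_apply, Pi.smul_apply, Pi.zero_apply, smul_eq_mul]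
    rw [hyv]
    have hs1 : (Pi.single s (1:ℝ) : V → ℝ) v = if v = s then 1 else 0 := Pi.single_apply s 1 v
    have ht1 : (Pi.single t (1:ℝ) : V → ℝ) v = if v = t then 1 else 0 := Pi.single_apply t 1 v
    rw [hs1, ht1]
    ring
  have hconst : z a = z b :=
    (lapMatrix_mulVec_eq_zero_iff_forall_reachable (G := G) (x := z)).mp (by rwa [Matrix.toLin'_apply] at hz) a b
      (hG.preconnected a b)
  have hmain : (x a - x b) * (τ : ℝ)
      = (Nat.card {T : SimpleGraph V // IsSpanningTree G T ∧ PathUsesDart T s t a b} : ℝ)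
        - (Nat.card {T : SimpleGraph V // IsSpanningTree G T ∧ PathUsesDart T s t b a} : ℝ) := by
    have h1 : (x a - x b) * (τ : ℝ) = y a - y b := by
      have := hconst
      simp only [hzdef] at this
      ring_nf
      ring_nf at this
      linarith
    rw [h1]
    exact edge_diff hab
  refine ⟨hmain, ?_⟩
  constructor
  · intro h
    have h2 : 0 < (x a - x b) * (τ : ℝ) := mul_pos h hτℝ
    rw [hmain] at h2
    have : ((Nat.card {T : SimpleGraph V // IsSpanningTree G T ∧ PathUsesDart T s t b a}) : ℝ)
        < Nat.card {T : SimpleGraph V // IsSpanningTree G T ∧ PathUsesDart T s t a b} := by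
      linarith
    exact_mod_cast this
  · intro h
    have h2 : ((Nat.card {T : SimpleGraph V // IsSpanningTree G T ∧ PathUsesDart T s t b a}) : ℝ)
        < Nat.card {T : SimpleGraph V // IsSpanningTree G T ∧ PathUsesDart T s t a b} := by
      exact_mod_cast h
    have h3 : 0 < (x a - x b) * (τ : ℝ) := by rw [hmain]; linarith
    by_contra hle
    push_neg at hle
    nlinarith
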